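/- Let α, β, q₀, q be real quaternions with |α| = 1, |β| = 1, |q₀| < 1, and conj(q₀)·q ≠ 1. Then 1 − |α·(q − q₀)·(1 − conj(q₀)·q)⁻¹·β⁻¹|² = (1 − |q₀|²)·(1 − |q|²)·|1 − conj(q₀)·q|⁻². In particular, if |q| < 1 then |α·(q − q₀)·(1 − conj(q₀)·q)⁻¹·β⁻¹| < 1. -/

import Mathlib

open scoped Quaternion

lemma key_sq (q₀ q : ℍ[ℝ]) :
    ‖(1 : ℍ[ℝ]) - star q₀ * q‖ ^ 2 - ‖q - q₀‖ ^ 2 = (1 - ‖q₀‖ ^ 2) * (1 - ‖q‖ ^ 2) := by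
  have h1 : ∀ x : ℍ[ℝ], ‖x‖ ^ 2 = Quaternion.normSq x := by
    intro x; rw [sq, ← Quaternion.normSq_eq_norm_mul_self]
  simp only [h1, Quaternion.normSq_def', Quaternion.re_mul, Quaternion.imI_mul,
    Quaternion.imJ_mul, Quaternion.imK_mul, Quaternion.re_sub, Quaternion.imI_sub,
    Quaternion.imJ_sub, Quaternion.imK_sub, Quaternion.re_one, Quaternion.imI_one,
    Quaternion.imJ_one, Quaternion.imK_one, Quaternion.re_star, Quaternion.imI_star,
    Quaternion.imJ_star, Quaternion.imK_star]
  ring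

/-- The key identity `1 − |α(q−q₀)(1−conj(q₀)q)⁻¹β⁻¹|² = (1−|q₀|²)(1−|q|²)|1−conj(q₀)q|⁻²`,
showing that maps of the canonical Möbius form preserve the unit disc. -/
theorem moebius_form_norm_identity (α β q₀ q : ℍ[ℝ])
    (hα : ‖α‖ = 1) (hβ : ‖β‖ = 1) (hq₀ : ‖q₀‖ < 1) (h : star q₀ * q ≠ 1) :
    1 - ‖α * (q - q₀) * (1 - star q₀ * q)⁻¹ * β⁻¹‖ ^ 2 =
      (1 - ‖q₀‖ ^ 2) * (1 - ‖q‖ ^ 2) * (‖1 - star q₀ * q‖ ^ 2)⁻¹ ∧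
    (‖q‖ < 1 → ‖α * (q - q₀) * (1 - star q₀ * q)⁻¹ * β⁻¹‖ < 1) := by
  have hA : (1 : ℍ[ℝ]) - star q₀ * q ≠ 0 := sub_ne_zero.mpr (Ne.symm h)
  have hAn : (0 : ℝ) < ‖(1 : ℍ[ℝ]) - star q₀ * q‖ := norm_pos_iff.mpr hA
  have hnorm : ‖α * (q - q₀) * (1 - star q₀ * q)⁻¹ * β⁻¹‖
      = ‖q - q₀‖ * ‖(1 : ℍ[ℝ]) - star q₀ * q‖⁻¹ := by
    simp [norm_mul, norm_inv, hα, hβ]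
  have hid : 1 - ‖α * (q - q₀) * (1 - star q₀ * q)⁻¹ * β⁻¹‖ ^ 2 =
      (1 - ‖q₀‖ ^ 2) * (1 - ‖q‖ ^ 2) * (‖1 - star q₀ * q‖ ^ 2)⁻¹ := by
    rw [hnorm, ← key_sq q₀ q]
    field_simp
  refine ⟨hid, fun hq => ?_⟩
  have h1 : (0 : ℝ) < (1 - ‖q₀‖ ^ 2) * (1 - ‖q‖ ^ 2) * (‖1 - star q₀ * q‖ ^ 2)⁻¹ := by
    have a : (0:ℝ) < 1 - ‖q₀‖ ^ 2 := by nlinarith [norm_nonneg q₀]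
    have b : (0:ℝ) < 1 - ‖q‖ ^ 2 := by nlinarith [norm_nonneg q]
    exact mul_pos (mul_pos a b) (inv_pos.mpr (by positivity))
  rw [← hid] at h1
  nlinarith [norm_nonneg (α * (q - q₀) * (1 - star q₀ * q)⁻¹ * β⁻¹)]
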